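/- Let θ > 0, α > 2, β₀, β₁, τ ∈ ℝ and δ ≥ 0. Set ν_τ = (β₀ + β₁τ)θ/(α−1) − β₁θ²/((α−1)(α−2)) and assume ν_τ ≠ 0 and (β₀ + β₁τ)(2−α) + β₁θ ≠ 0. Then (1/ν_τ) · ∫_0^∞ (β₀ + β₁(τ − u)) · θ^α (δ + u + θ)^{−α} du = θ^{α−1}(δ+θ)^{1−α} · (1 + β₁δ/((β₀ + β₁τ)(2−α) + β₁θ)). -/

import Mathlib

open MeasureTheory

lemma shift_Ioi (f : ℝ → ℝ) (s : ℝ) :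
    ∫ u in Set.Ioi (0 : ℝ), f (u + s) = ∫ x in Set.Ioi s, f x := by
  have h := (measurePreserving_add_right (volume : Measure ℝ) s).setIntegral_preimage_emb
    (MeasurableEquiv.addRight s).measurableEmbedding f (Set.Ioi s)
  have hpre : (· + s) ⁻¹' Set.Ioi s = Set.Ioi (0 : ℝ) := by
    ext x; simp
  rw [hpre] at h
  exact h

lemma shiftIntegrableOn (f : ℝ → ℝ) (s : ℝ) (hf : IntegrableOn f (Set.Ioi s)) :
    IntegrableOn (fun u => f (u + s)) (Set.Ioi (0 : ℝ)) := by
  have h := (measurePreserving_add_right (volume : Measure ℝ) s).integrableOn_comp_preimage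
    (MeasurableEquiv.addRight s).measurableEmbedding (f := f) (s := Set.Ioi s)
  rw [show (· + s) ⁻¹' Set.Ioi s = Set.Ioi (0 : ℝ) by ext x; simp] at h
  exact h.mpr hf

lemma int2aux (s α : ℝ) (hs : 0 < s) (hα : 2 < α) :
    IntegrableOn (fun x : ℝ => (x - s) * x ^ (-α)) (Set.Ioi s) := by
  have ha : IntegrableOn (fun x : ℝ => x ^ (1 - α)) (Set.Ioi s) :=
    integrableOn_Ioi_rpow_of_lt (by linarith) hs
  have hb : IntegrableOn (fun x : ℝ => s * x ^ (-α)) (Set.Ioi s) :=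
    (integrableOn_Ioi_rpow_of_lt (by linarith) hs).smul s
  apply (ha.sub hb).congr
  filter_upwards [ae_restrict_mem measurableSet_Ioi] with x hx
  have hx0 : 0 < x := lt_trans hs hx
  have h1 : x ^ (1 - α) = x * x ^ (-α) := by
    rw [show (1 : ℝ) - α = 1 + (-α) by ring, Real.rpow_add hx0, Real.rpow_one]
  simp only [Pi.sub_apply, h1]
  ring

lemma int1 (s α : ℝ) (hs : 0 < s) (hα : 2 < α) :
    ∫ u in Set.Ioi (0 : ℝ), (u + s) ^ (-α) = s ^ (1 - α) / (α - 1) := by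
  rw [shift_Ioi (fun x => x ^ (-α)) s,
    integral_Ioi_rpow_of_lt (by linarith) hs]
  rw [show -α + 1 = 1 - α by ring]
  have h1 : (1 : ℝ) - α ≠ 0 := by linarith
  have h2 : α - 1 ≠ 0 := by linarith
  field_simp
  ring

lemma int2 (s α : ℝ) (hs : 0 < s) (hα : 2 < α) :
    ∫ u in Set.Ioi (0 : ℝ), u * (u + s) ^ (-α)
      = s ^ (2 - α) / ((α - 1) * (α - 2)) := by
  have h : ∫ u in Set.Ioi (0 : ℝ), u * (u + s) ^ (-α)
      = ∫ x in Set.Ioi s, (x - s) * x ^ (-α) := by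
    have := shift_Ioi (fun x => (x - s) * x ^ (-α)) s
    simpa using this
  rw [h]
  have hcong : ∀ x ∈ Set.Ioi s, (x - s) * x ^ (-α) = x ^ (1 - α) - s * x ^ (-α) := by
    intro x hx
    have hx0 : 0 < x := lt_trans hs hx
    have : x ^ (1 - α) = x * x ^ (-α) := by
      rw [show (1 : ℝ) - α = 1 + (-α) by ring, Real.rpow_add hx0, Real.rpow_one]
    rw [this]; ring
  rw [setIntegral_congr_fun measurableSet_Ioi hcong]
  have h1 : IntegrableOn (fun x : ℝ => x ^ (1 - α)) (Set.Ioi s) :=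
    integrableOn_Ioi_rpow_of_lt (by linarith) hs
  have h2 : IntegrableOn (fun x : ℝ => s * x ^ (-α)) (Set.Ioi s) :=
    (integrableOn_Ioi_rpow_of_lt (by linarith) hs).smul s
  rw [integral_sub h1 h2, integral_const_mul,
    integral_Ioi_rpow_of_lt (by linarith) hs,
    integral_Ioi_rpow_of_lt (by linarith) hs]
  rw [show (1 : ℝ) - α + 1 = 2 - α by ring, show -α + 1 = 1 - α by ring]
  have hexp : s ^ (2 - α) = s ^ (1 - α) * s := by
    rw [show (2 : ℝ) - α = (1 - α) + 1 by ring, Real.rpow_add hs, Real.rpow_one]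
  rw [hexp]
  have hα1 : α - 1 ≠ 0 := by linarith
  have hα2 : α - 2 ≠ 0 := by linarith
  have hα1' : (1 : ℝ) - α ≠ 0 := by linarith
  have hα2' : (2 : ℝ) - α ≠ 0 := by linarith
  field_simp
  ring

/-- For `θ > 0`, `α > 2`, reals `β₀, β₁, τ` and `δ ≥ 0`, with
`ν_τ = (β₀ + β₁τ)θ/(α-1) - β₁θ²/((α-1)(α-2)) ≠ 0` and
`(β₀ + β₁τ)(2-α) + β₁θ ≠ 0`:
`(1/ν_τ) ∫_0^∞ (β₀ + β₁(τ - u)) θ^α (δ + u + θ)^(-α) du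
  = θ^(α-1)(δ+θ)^(1-α) (1 + β₁δ/((β₀ + β₁τ)(2-α) + β₁θ))`. -/
theorem stmt_17
    (θ α β₀ β₁ τ δ : ℝ) (hθ : 0 < θ) (hα : 2 < α) (hδ : 0 ≤ δ)
    (ντ : ℝ)
    (hντ : ντ = (β₀ + β₁ * τ) * θ / (α - 1) - β₁ * θ ^ 2 / ((α - 1) * (α - 2)))
    (hντ_ne : ντ ≠ 0)
    (hden : (β₀ + β₁ * τ) * (2 - α) + β₁ * θ ≠ 0) :
    (1 / ντ) * ∫ u in Set.Ioi (0 : ℝ),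
        (β₀ + β₁ * (τ - u)) * (θ ^ α * (δ + u + θ) ^ (-α))
      = θ ^ (α - 1) * (δ + θ) ^ (1 - α)
          * (1 + β₁ * δ / ((β₀ + β₁ * τ) * (2 - α) + β₁ * θ)) := by
  set s := δ + θ with hs_def
  have hs : 0 < s := by positivity
  set c := β₀ + β₁ * τ with hc_def
  have hI1 : IntegrableOn (fun u : ℝ => (u + s) ^ (-α)) (Set.Ioi 0) :=
    shiftIntegrableOn (fun x => x ^ (-α)) s
      (integrableOn_Ioi_rpow_of_lt (by linarith) hs)
  have hI2 : IntegrableOn (fun u : ℝ => u * (u + s) ^ (-α)) (Set.Ioi 0) := by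
    have h := shiftIntegrableOn (fun x => (x - s) * x ^ (-α)) s (int2aux s α hs hα)
    apply h.congr_fun _ measurableSet_Ioi
    intro u _
    simp
  have hint : ∫ u in Set.Ioi (0 : ℝ), (β₀ + β₁ * (τ - u)) * (θ ^ α * (δ + u + θ) ^ (-α))
      = θ ^ α * (c * (s ^ (1 - α) / (α - 1)) - β₁ * (s ^ (2 - α) / ((α - 1) * (α - 2)))) := by
    have heq : ∀ u ∈ Set.Ioi (0 : ℝ),
        (β₀ + β₁ * (τ - u)) * (θ ^ α * (δ + u + θ) ^ (-α))
          = θ ^ α * (c * (u + s) ^ (-α)) - θ ^ α * (β₁ * (u * (u + s) ^ (-α))) := by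
      intro u _
      have : δ + u + θ = u + s := by rw [hs_def]; ring
      rw [this]; ring
    rw [setIntegral_congr_fun measurableSet_Ioi heq]
    rw [integral_sub (((hI1.const_mul c).const_mul (θ ^ α)))
      (((hI2.const_mul β₁).const_mul (θ ^ α)))]
    rw [integral_const_mul, integral_const_mul, integral_const_mul, integral_const_mul,
      int1 s α hs hα, int2 s α hs hα]
    ring
  rw [hint]
  have hθα : θ ^ (α - 1) = θ ^ α / θ := by
    rw [Real.rpow_sub hθ, Real.rpow_one]
  have hs2 : s ^ (2 - α) = s ^ (1 - α) * s := by
    rw [show (2 : ℝ) - α = (1 - α) + 1 by ring, Real.rpow_add hs, Real.rpow_one]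
  have hα1 : α - 1 ≠ 0 := by linarith
  have hα2 : α - 2 ≠ 0 := by linarith
  have hθ0 : θ ≠ 0 := ne_of_gt hθ
  have key : ντ = -θ * (c * (2 - α) + β₁ * θ) / ((α - 1) * (α - 2)) := by
    rw [hντ]; field_simp; ring
  rw [hθα, hs2, key, hs_def]
  field_simp
  rw [mul_comm θ β₁]
  field_simp
  ring
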